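/- Under the hypotheses of the Kalman residual identity (Σ psd, Σ_Y positive definite), the likelihood score evaluated at the Kalman posterior mean satisfies: −HᵀΣ_Y⁻¹(Hμ⁺ − y) = −Hᵀ(HΣHᵀ + Σ_Y)⁻¹(Hμ − y), where μ⁺ = μ + ΣHᵀ(HΣHᵀ + Σ_Y)⁻¹(y − Hμ). -/
import Mathlib

open Matrix

/-- the likelihood score evaluated at the Kalman posterior mean
`μ⁺ = μ + ΣHᵀ(HΣHᵀ + Σ_Y)⁻¹(y − Hμ)` satisfies
`−HᵀΣ_Y⁻¹(Hμ⁺ − y) = −Hᵀ(HΣHᵀ + Σ_Y)⁻¹(Hμ − y)`. -/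
theorem score_at_kalman_mean {dx dy : ℕ}
    (S : Matrix (Fin dx) (Fin dx) ℝ) (hS : S.PosSemidef)
    (SY : Matrix (Fin dy) (Fin dy) ℝ) (hSY : SY.PosDef)
    (H : Matrix (Fin dy) (Fin dx) ℝ) (μ : Fin dx → ℝ) (y : Fin dy → ℝ)
    (μplus : Fin dx → ℝ)
    (hμplus : μplus = μ + (S * Hᵀ) *ᵥ ((H * S * Hᵀ + SY)⁻¹ *ᵥ (y - H *ᵥ μ))) :
    -(Hᵀ *ᵥ (SY⁻¹ *ᵥ (H *ᵥ μplus - y)))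
      = -(Hᵀ *ᵥ ((H * S * Hᵀ + SY)⁻¹ *ᵥ (H *ᵥ μ - y))) := by
  set A := H * S * Hᵀ + SY with hA
  have hHSH : (H * S * Hᵀ).PosSemidef := by
    have := hS.mul_mul_conjTranspose_same H
    simpa [Matrix.mul_assoc] using this
  have hApd : A.PosDef := Matrix.PosDef.posSemidef_add hHSH hSY
  have hAinv : IsUnit A.det := hApd.det_pos.ne'.isUnit
  have hSYinv : IsUnit SY.det := hSY.det_pos.ne'.isUnit
  -- key: H *ᵥ μplus - y = SY *ᵥ (A⁻¹ *ᵥ (H *ᵥ μ - y))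
  have key : H *ᵥ μplus - y = SY *ᵥ (A⁻¹ *ᵥ (H *ᵥ μ - y)) := by
    have h1 : SY = A - H * S * Hᵀ := by simp [hA]
    have h2 : A * A⁻¹ = 1 := Matrix.mul_nonsing_inv A hAinv
    calc H *ᵥ μplus - y
        = (H *ᵥ μ - y) - (H * (S * Hᵀ)) *ᵥ (A⁻¹ *ᵥ (H *ᵥ μ - y)) := by
          rw [hμplus]
          simp [Matrix.mulVec_add, Matrix.mulVec_sub, Matrix.mulVec_mulVec,
            Matrix.mul_assoc, sub_eq_add_neg, Matrix.mulVec_neg]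
          abel
      _ = (A * A⁻¹) *ᵥ (H *ᵥ μ - y) - (H * S * Hᵀ) *ᵥ (A⁻¹ *ᵥ (H *ᵥ μ - y)) := by
          rw [h2]; simp [Matrix.mul_assoc]
      _ = SY *ᵥ (A⁻¹ *ᵥ (H *ᵥ μ - y)) := by
          rw [h1, Matrix.sub_mulVec, ← Matrix.mulVec_mulVec]
  rw [key, Matrix.mulVec_mulVec _ SY⁻¹ SY, Matrix.nonsing_inv_mul SY hSYinv,
    Matrix.one_mulVec]
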